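/- arXiv:2411.12080 — 2 statements merged into one kernel-verified Lean document; each statement's English description precedes it below -/
import Mathlib

section
/- Let σ̲, σ̄ ∈ R^{d×d} and let Γ̲, Γ̄ ∈ S^d (symmetric d×d matrices) satisfy the block matrix inequality diag(Γ̲, −Γ̄) ≤ (3/ε)·G, where G is the 2d×2d block matrix with I blocks on the diagonal and −I blocks off-diagonal. Then tr(σ̲σ̲ᵀΓ̲ − σ̄σ̄ᵀΓ̄) ≤ (3/ε)·‖σ̲ − σ̄‖_F², where ‖·‖_F is the Frobenius norm. -/
open Matrix

private lemma trace_CIL_aux (d : ℕ) (σ Γ : Matrix (Fin d) (Fin d) ℝ) (hΓ : Γ.IsSymm) :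
    (σ * σ.transpose * Γ).trace = ∑ j, (fun i => σ i j) ⬝ᵥ (Γ *ᵥ fun i => σ i j) := by
  simp only [trace, diag_apply, mul_apply, transpose_apply, dotProduct, mulVec, dotProduct,
    Finset.sum_mul, Finset.mul_sum]
  conv_lhs => enter [2, x]; rw [Finset.sum_comm]
  rw [Finset.sum_comm]
  apply Finset.sum_congr rfl
  intro j _
  apply Finset.sum_congr rfl
  intro i _
  apply Finset.sum_congr rfl
  intro k _
  rw [hΓ.apply k i]
  ring

private lemma quad_CIL_aux (d : ℕ) (ε : ℝ)
    (σ₁ σ₂ Γ₁ Γ₂ : Matrix (Fin d) (Fin d) ℝ)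
    (h : ((3 / ε) • Matrix.fromBlocks (1 : Matrix (Fin d) (Fin d) ℝ) (-1) (-1) 1
          - Matrix.fromBlocks Γ₁ 0 0 (-Γ₂)).PosSemidef) (j : Fin d) :
    (fun i => σ₁ i j) ⬝ᵥ (Γ₁ *ᵥ fun i => σ₁ i j) - (fun i => σ₂ i j) ⬝ᵥ (Γ₂ *ᵥ fun i => σ₂ i j)
        ≤ (3/ε) * ∑ i, (σ₁ i j - σ₂ i j)^2 := by
  set f : Fin d → ℝ := fun i => σ₁ i j
  set g : Fin d → ℝ := fun i => σ₂ i j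
  have h2 := h.dotProduct_mulVec_nonneg (Sum.elim f g)
  rw [Matrix.sub_mulVec, Matrix.smul_mulVec] at h2
  have e1 : Sum.elim f g ∘ Sum.inl = f := rfl
  have e2 : Sum.elim f g ∘ Sum.inr = g := rfl
  rw [Matrix.fromBlocks_mulVec, Matrix.fromBlocks_mulVec, e1, e2] at h2
  simp only [Matrix.one_mulVec, Matrix.neg_mulVec, Matrix.zero_mulVec, Matrix.one_mulVec,
    add_zero, zero_add, star_trivial] at h2
  have e3 : ∀ (u v : Fin d → ℝ), Sum.elim f g ⬝ᵥ Sum.elim u v = f ⬝ᵥ u + g ⬝ᵥ v := by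
    intro u v
    simp [dotProduct, Fintype.sum_sum_type]
  rw [dotProduct_sub, dotProduct_smul] at h2
  have e4 : Sum.elim f g ⬝ᵥ (Sum.elim (f + -g) (-f + g)) = ∑ i, (f i - g i)^2 := by
    rw [e3]
    simp only [dotProduct, Pi.add_apply, Pi.neg_apply]
    rw [← Finset.sum_add_distrib]
    apply Finset.sum_congr rfl
    intro i _
    ring
  rw [e4, e3] at h2
  simp only [Matrix.neg_mulVec, dotProduct_neg, smul_eq_mul] at h2
  linarith

/-- the trace estimate from the Crandall–Ishii–Lions matrix inequality. -/
theorem trace_estimate_CIL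
    (d : ℕ) (ε : ℝ) (hε : 0 < ε)
    (σ₁ σ₂ Γ₁ Γ₂ : Matrix (Fin d) (Fin d) ℝ)
    (hΓ₁ : Γ₁.IsSymm) (hΓ₂ : Γ₂.IsSymm)
    (h : ((3 / ε) • Matrix.fromBlocks (1 : Matrix (Fin d) (Fin d) ℝ) (-1) (-1) 1
          - Matrix.fromBlocks Γ₁ 0 0 (-Γ₂)).PosSemidef) :
    (σ₁ * σ₁.transpose * Γ₁).trace - (σ₂ * σ₂.transpose * Γ₂).trace
      ≤ (3 / ε) * ∑ i, ∑ j, (σ₁ i j - σ₂ i j) ^ 2 := by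
  rw [trace_CIL_aux d σ₁ Γ₁ hΓ₁, trace_CIL_aux d σ₂ Γ₂ hΓ₂, ← Finset.sum_sub_distrib,
    Finset.sum_comm, Finset.mul_sum]
  exact Finset.sum_le_sum fun j _ => quad_CIL_aux d ε σ₁ σ₂ Γ₁ Γ₂ h j
end

section
/- Let (Λ_t)_{t≥0} and (Λ'_t)_{t≥0} be continuous nondecreasing real-valued functions with Λ_0 = |𝔬|, Λ'_0 = |𝔬'|, and suppose both satisfy Λ_{t+s} − Λ_t ≥ s/c for all t, s ≥ 0 (with c ≥ 1). Define exit times τ = inf{t ≥ 0 : Λ_t ≥ T} and τ' = inf{t ≥ 0 : Λ'_t ≥ T}, and assume τ, τ' ≤ T* := cT. Then |τ − τ'| ≤ c · sup_{t ≤ T*} |Λ_t − Λ'_t|. -/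
open Set

/-- Auxiliary: the infimum belongs to the (closed, nonempty, bdd below) hitting set. -/
lemma exit_mem_aux (Λ : ℝ → ℝ) (a c T : ℝ) (hc : 1 ≤ c) (hT : 0 < T)
    (hΛcont : Continuous Λ) (hΛ0 : Λ 0 = a)
    (hgrow : ∀ t s : ℝ, 0 ≤ t → 0 ≤ s → s / c ≤ Λ (t + s) - Λ t) :
    sInf {t : ℝ | 0 ≤ t ∧ T ≤ Λ t} ∈ {t : ℝ | 0 ≤ t ∧ T ≤ Λ t} := by
  have hc0 : (0 : ℝ) < c := lt_of_lt_of_le one_pos hc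
  have hclosed : IsClosed {t : ℝ | 0 ≤ t ∧ T ≤ Λ t} := by
    have : {t : ℝ | 0 ≤ t ∧ T ≤ Λ t} = Ici 0 ∩ Λ ⁻¹' (Ici T) := by
      ext t; simp only [Set.mem_setOf_eq, Set.mem_inter_iff, Set.mem_Ici, Set.mem_preimage]
    rw [this]
    exact isClosed_Ici.inter (isClosed_Ici.preimage hΛcont)
  have hne : ({t : ℝ | 0 ≤ t ∧ T ≤ Λ t}).Nonempty := by
    refine ⟨c * (T + |a|), ?_, ?_⟩
    · positivity
    · have := hgrow 0 (c * (T + |a|)) le_rfl (by positivity)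
      rw [zero_add, hΛ0] at this
      have h1 : c * (T + |a|) / c = T + |a| := by field_simp
      rw [h1] at this
      nlinarith [abs_nonneg a, neg_abs_le a]
  have hbdd : BddBelow {t : ℝ | 0 ≤ t ∧ T ≤ Λ t} := ⟨0, fun t ht => ht.1⟩
  exact hclosed.csInf_mem hne hbdd

/-- Auxiliary one-sided estimate. -/
lemma exit_one_side (Λ Λ' : ℝ → ℝ) (a a' c T : ℝ)
    (hc : 1 ≤ c) (hT : 0 < T)
    (hΛcont : Continuous Λ) (hΛ'cont : Continuous Λ')
    (hΛ0 : Λ 0 = a) (hΛ'0 : Λ' 0 = a')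
    (hgrow : ∀ t s : ℝ, 0 ≤ t → 0 ≤ s → s / c ≤ Λ (t + s) - Λ t)
    (hgrow' : ∀ t s : ℝ, 0 ≤ t → 0 ≤ s → s / c ≤ Λ' (t + s) - Λ' t)
    (τ τ' : ℝ)
    (hτ : τ = sInf {t : ℝ | 0 ≤ t ∧ T ≤ Λ t})
    (hτ' : τ' = sInf {t : ℝ | 0 ≤ t ∧ T ≤ Λ' t})
    (hτb : τ ≤ c * T) :
    τ' - τ ≤ c * ⨆ t : Set.Icc (0 : ℝ) (c * T), |Λ t - Λ' t| := by
  have hc0 : (0 : ℝ) < c := lt_of_lt_of_le one_pos hc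
  set ε := ⨆ t : Set.Icc (0 : ℝ) (c * T), |Λ t - Λ' t| with hε
  have hbddA : BddAbove (Set.range fun t : Set.Icc (0 : ℝ) (c * T) => |Λ t - Λ' t|) := by
    have himg : BddAbove ((fun t => |Λ t - Λ' t|) '' Set.Icc (0 : ℝ) (c * T)) :=
      (isCompact_Icc.image_of_continuousOn
        (((hΛcont.sub hΛ'cont).abs).continuousOn)).bddAbove
    rwa [← Set.range_restrict] at himg
  have hεb : ∀ t : ℝ, t ∈ Set.Icc (0 : ℝ) (c * T) → |Λ t - Λ' t| ≤ ε := by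
    intro t ht
    exact le_ciSup hbddA ⟨t, ht⟩
  have hmemτ := exit_mem_aux Λ a c T hc hT hΛcont hΛ0 hgrow
  rw [← hτ] at hmemτ
  obtain ⟨hτ0, hΛτ⟩ := hmemτ
  have hε0 : 0 ≤ ε := le_trans (abs_nonneg _) (hεb 0 ⟨le_rfl, by positivity⟩)
  -- Λ' (τ + c * ε) ≥ T
  have hclose : |Λ τ - Λ' τ| ≤ ε := hεb τ ⟨hτ0, hτb⟩
  have h1 : T - ε ≤ Λ' τ := by
    have := abs_le.mp hclose
    linarith
  have h2 : T ≤ Λ' (τ + c * ε) := by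
    have hg := hgrow' τ (c * ε) hτ0 (by positivity)
    have : c * ε / c = ε := by field_simp
    rw [this] at hg
    linarith
  have hmem : τ + c * ε ∈ {t : ℝ | 0 ≤ t ∧ T ≤ Λ' t} :=
    ⟨by positivity, h2⟩
  have hle : τ' ≤ τ + c * ε := by
    rw [hτ']
    exact csInf_le ⟨0, fun t ht => ht.1⟩ hmem
  linarith

/-- closeness of the clocks implies closeness of their exit times. -/
theorem exit_time_estimate
    (Λ Λ' : ℝ → ℝ) (a a' c T : ℝ)
    (hc : 1 ≤ c) (hT : 0 < T)
    (hΛcont : Continuous Λ) (hΛ'cont : Continuous Λ')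
    (hΛmono : Monotone Λ) (hΛ'mono : Monotone Λ')
    (hΛ0 : Λ 0 = a) (hΛ'0 : Λ' 0 = a')
    (hgrow : ∀ t s : ℝ, 0 ≤ t → 0 ≤ s → s / c ≤ Λ (t + s) - Λ t)
    (hgrow' : ∀ t s : ℝ, 0 ≤ t → 0 ≤ s → s / c ≤ Λ' (t + s) - Λ' t)
    (τ τ' : ℝ)
    (hτ : τ = sInf {t : ℝ | 0 ≤ t ∧ T ≤ Λ t})
    (hτ' : τ' = sInf {t : ℝ | 0 ≤ t ∧ T ≤ Λ' t})
    (hτb : τ ≤ c * T) (hτ'b : τ' ≤ c * T) :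
    |τ - τ'| ≤ c * ⨆ t : Set.Icc (0 : ℝ) (c * T), |Λ t - Λ' t| := by
  have h1 := exit_one_side Λ Λ' a a' c T hc hT hΛcont hΛ'cont hΛ0 hΛ'0
    hgrow hgrow' τ τ' hτ hτ' hτb
  have h2 := exit_one_side Λ' Λ a' a c T hc hT hΛ'cont hΛcont hΛ'0 hΛ0
    hgrow' hgrow τ' τ hτ' hτ hτ'b
  have hsym : (⨆ t : Set.Icc (0 : ℝ) (c * T), |Λ' t - Λ t|)
      = ⨆ t : Set.Icc (0 : ℝ) (c * T), |Λ t - Λ' t| := by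
    congr 1; funext t; rw [abs_sub_comm]
  rw [hsym] at h2
  rw [abs_sub_le_iff]
  exact ⟨h2, h1⟩
end
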